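/- Let g_{2m}(x) = ∏_{i=0}^{m-1}(x² - [2i]²) and g^{(2m)}(x) = g_{2m}(x)/[2m]!. Then for every ℓ ∈ ℤ and m ≥ 1, g^{(2m)}([2ℓ]) lies in ℤ[q, q^{-1}]; explicitly g^{(2m)}([2ℓ]) = \binom{ℓ+m-1}{2m}_q ∏_{i=1-m}^{m}(q^{ℓ+i}+q^{-ℓ-i}) + g^{(2m-1)}([2ℓ]). -/

import Mathlib

open Finset Polynomial

noncomputable def q : RatFunc ℚ := RatFunc.X

noncomputable def qa (n : ℤ) : RatFunc ℚ := (q ^ n - q ^ (-n)) / (q - q⁻¹)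

noncomputable def qfac (n : ℕ) : RatFunc ℚ := ∏ k ∈ Finset.range n, qa ((k : ℤ) + 1)

noncomputable def qbin (a : ℤ) (n : ℕ) : RatFunc ℚ :=
  ∏ k ∈ Finset.range n, qa (a - (k : ℤ)) / qa ((k : ℤ) + 1)

noncomputable def qa2 (n : ℤ) : RatFunc ℚ :=
  (q ^ (2 * n) - q ^ (-(2 * n))) / (q ^ (2 : ℤ) - q ^ (-2 : ℤ))

noncomputable def qbin2 (a : ℤ) (n : ℕ) : RatFunc ℚ :=
  ∏ k ∈ Finset.range n, qa2 (a - (k : ℤ)) / qa2 ((k : ℤ) + 1)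

noncomputable def LaurentZ : Subring (RatFunc ℚ) := Subring.closure {q, q⁻¹}

noncomputable def NatLaurent : Subsemiring (RatFunc ℚ) := Subsemiring.closure {q⁻¹}

/-- g^{(2m)}([2ℓ]) where g_{2m}(x) = ∏_{i=0}^{m-1} (x² - [2i]²). -/
noncomputable def gEvenEval (ℓ : ℤ) (m : ℕ) : RatFunc ℚ :=
  (∏ i ∈ Finset.range m, (qa (2 * ℓ) ^ 2 - qa (2 * (i : ℤ)) ^ 2)) / qfac (2 * m)

/-- g^{(2m-1)}([2ℓ]) where g_{2m-1}(x) = x·∏_{i=1}^{m-1} (x² - [2i]²). -/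
noncomputable def gOddEval' (ℓ : ℤ) (m : ℕ) : RatFunc ℚ :=
  (qa (2 * ℓ) * ∏ i ∈ Finset.range (m - 1), (qa (2 * ℓ) ^ 2 - qa (2 * ((i : ℤ) + 1)) ^ 2))
    / qfac (2 * m - 1)

lemma q_ne : q ≠ 0 := by
  simpa [q] using RatFunc.X_ne_zero (K := ℚ)

lemma intDeg_pow (k : ℕ) : (q ^ k).intDegree = k := by
  induction k with
  | zero => simpa using RatFunc.intDegree_one
  | succ n ih =>
    rw [pow_succ, RatFunc.intDegree_mul (pow_ne_zero _ q_ne) q_ne, ih]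
    simp [q, RatFunc.intDegree_X]

lemma intDeg_zpow (n : ℤ) : (q ^ n).intDegree = n := by
  cases n with
  | ofNat k => simpa using intDeg_pow k
  | negSucc k =>
    have h1 : (q ^ (Int.negSucc k)) * q ^ (k+1) = 1 := by
      rw [← zpow_natCast q (k+1), ← zpow_add₀ q_ne, Int.negSucc_eq]
      push_cast
      rw [show (-((k:ℤ) + 1)) + ((k:ℤ)+1) = 0 by ring]
      simp
    have h2 := RatFunc.intDegree_mul (x := q ^ (Int.negSucc k)) (y := q ^ (k+1))
      (by intro h; simp [h] at h1) (pow_ne_zero _ q_ne)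
    rw [h1, RatFunc.intDegree_one, intDeg_pow] at h2
    rw [Int.negSucc_eq] at h2 ⊢
    push_cast at h2 ⊢
    omega

lemma q_zpow_ne_one {n : ℤ} (hn : n ≠ 0) : q ^ n ≠ 1 := by
  intro h
  have := intDeg_zpow n
  rw [h, RatFunc.intDegree_one] at this
  exact hn this.symm

lemma d_ne : q - q⁻¹ ≠ 0 := by
  intro h
  have h2 : q ^ (2:ℤ) = 1 := by
    have : q * q = 1 := by
      have := congrArg (· * q) h
      simp only [sub_mul, inv_mul_cancel₀ q_ne, zero_mul] at this
      linear_combination this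
    rw [show (2:ℤ) = 1 + 1 by norm_num, zpow_add₀ q_ne]
    simpa using this
  exact q_zpow_ne_one (by norm_num) h2

lemma qa_ne {n : ℤ} (hn : n ≠ 0) : qa n ≠ 0 := by
  unfold qa
  apply div_ne_zero _ d_ne
  intro h
  have : q ^ n * q ^ n = q ^ n * q ^ (-n) := by rw [sub_eq_zero] at h; rw [h]
  rw [← zpow_add₀ q_ne, ← zpow_add₀ q_ne] at this
  simp at this
  exact q_zpow_ne_one (by omega) this

lemma qa_neg (n : ℤ) : qa (-n) = -qa n := by
  unfold qa
  rw [neg_neg, ← neg_sub (q^n), neg_div]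

lemma qa_zero : qa 0 = 0 := by simp [qa]

lemma qa_split (a k : ℤ) : qa a = q^k * qa (a-k) + q^(k-a) * qa k := by
  unfold qa
  rw [mul_div_assoc', mul_div_assoc', ← add_div]
  congr 1
  rw [mul_sub, mul_sub, ← zpow_add₀ q_ne, ← zpow_add₀ q_ne, ← zpow_add₀ q_ne, ← zpow_add₀ q_ne,
      show k + (a-k) = a by ring, show k + -(a-k) = k-a+k by ring, show k-a + -k = -a by ring]
  ring

lemma qa_double (n : ℤ) : qa (2*n) = qa n * (q^n + q^(-n)) := by
  unfold qa
  rw [div_mul_eq_mul_div]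
  congr 1
  rw [sub_mul, mul_add, mul_add, ← zpow_add₀ q_ne, ← zpow_add₀ q_ne, ← zpow_add₀ q_ne,
      ← zpow_add₀ q_ne, show n + n = 2*n by ring, show n + -n = 0 by ring,
      show -n + n = 0 by ring, show -n + -n = -(2*n) by ring]
  simp
  ring

lemma qa_sq_diff (a b : ℤ) : qa a ^ 2 - qa b ^ 2 = qa (a+b) * qa (a-b) := by
  unfold qa
  rw [div_pow, div_pow, div_sub_div_same, div_mul_div_comm, ← sq]
  congr 1
  rw [sub_sq, sub_sq, sub_mul, mul_sub, mul_sub,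
     ← zpow_add₀ q_ne, ← zpow_add₀ q_ne, ← zpow_add₀ q_ne, ← zpow_add₀ q_ne,
     show a+b + (a-b) = a+a by ring, show (a+b) + -(a-b) = b+b by ring,
     show -(a+b)+(a-b) = -b + -b by ring, show -(a+b) + -(a-b) = -a + -a by ring,
     zpow_add₀ q_ne, zpow_add₀ q_ne, zpow_add₀ q_ne, zpow_add₀ q_ne]
  have h0 : q ^ (a:ℤ) * q ^ (-a:ℤ) = 1 := by rw [← zpow_add₀ q_ne]; simp
  have h1 : q ^ (b:ℤ) * q ^ (-b:ℤ) = 1 := by rw [← zpow_add₀ q_ne]; simp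
  linear_combination (2:RatFunc ℚ) * h1 - 2 * h0

lemma key_sub (l m : ℤ) : qa (2*l) - qa (2*m) = qa (l-m) * (q^(l+m) + q^(-(l+m))) := by
  unfold qa
  rw [div_sub_div_same, div_mul_eq_mul_div]
  congr 1
  rw [sub_mul, mul_add, mul_add, ← zpow_add₀ q_ne, ← zpow_add₀ q_ne, ← zpow_add₀ q_ne,
      ← zpow_add₀ q_ne, show l-m + (l+m) = 2*l by ring, show l-m + -(l+m) = -(2*m) by ring,
      show -(l-m) + (l+m) = 2*m by ring, show -(l-m) + -(l+m) = -(2*l) by ring]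
  ring





lemma qfac_ne (n : ℕ) : qfac n ≠ 0 := by
  unfold qfac
  apply Finset.prod_ne_zero_iff.mpr
  intro k _
  exact qa_ne (by omega)

lemma qfac_succ (n : ℕ) : qfac (n+1) = qfac n * qa (n+1) := by
  unfold qfac
  rw [Finset.prod_range_succ]

lemma prod_Icc_pred (f : ℤ → RatFunc ℚ) (a b : ℤ) (h : a ≤ b + 1) :
    ∏ j ∈ Finset.Icc (a-1) b, f j = f (a-1) * ∏ j ∈ Finset.Icc a b, f j := by
  have h1 : Finset.Icc (a-1) b = insert (a-1) (Finset.Icc a b) := by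
    ext x; simp only [Finset.mem_Icc, Finset.mem_insert]; omega
  rw [h1, Finset.prod_insert (by simp only [Finset.mem_Icc]; omega)]

lemma prod_Icc_succ (f : ℤ → RatFunc ℚ) (a b : ℤ) (h : a ≤ b + 1) :
    ∏ j ∈ Finset.Icc a (b+1), f j = f (b+1) * ∏ j ∈ Finset.Icc a b, f j := by
  have h1 : Finset.Icc a (b+1) = insert (b+1) (Finset.Icc a b) := by
    ext x; simp only [Finset.mem_Icc, Finset.mem_insert]; omega
  rw [h1, Finset.prod_insert (by simp only [Finset.mem_Icc]; omega)]

lemma prod_range_sub_Icc (f : ℤ → RatFunc ℚ) (a : ℤ) (n : ℕ) :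
    ∏ k ∈ Finset.range n, f (a - (k:ℤ)) = ∏ j ∈ Finset.Icc (a - n + 1) a, f j := by
  induction n with
  | zero => simp
  | succ n ih =>
    rw [Finset.prod_range_succ, ih, mul_comm]
    rw [show a - (n+1:ℕ) + 1 = (a - n + 1) - 1 by push_cast; ring,
        prod_Icc_pred f _ _ (by omega),
        show a - (n:ℤ) + 1 - 1 = a - (n:ℤ) by ring]

lemma prod_Icc_shift (f : ℤ → RatFunc ℚ) (a b c : ℤ) :
    ∏ i ∈ Finset.Icc a b, f (c + i) = ∏ j ∈ Finset.Icc (c+a) (c+b), f j := by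
  rw [← Finset.map_add_left_Icc, Finset.prod_map]
  simp [addLeftEmbedding]

lemma qbin_eq (a : ℤ) (n : ℕ) :
    qbin a n = (∏ j ∈ Finset.Icc (a - n + 1) a, qa j) / qfac n := by
  unfold qbin qfac
  rw [Finset.prod_div_distrib, prod_range_sub_Icc]

lemma prod_O (l : ℤ) (m : ℕ) (hm : 1 ≤ m) :
    qa (2*l) * ∏ i ∈ Finset.range (m-1), (qa (2*l)^2 - qa (2*((i:ℤ)+1))^2)
      = ∏ j ∈ Finset.Icc (l-(m:ℤ)+1) (l+(m:ℤ)-1), qa (2*j) := by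
  induction m, hm using Nat.le_induction with
  | base =>
    simp only [Nat.cast_one]
    rw [show l - 1 + 1 = l by ring, show l + 1 - 1 = l by ring, Finset.Icc_self,
        Finset.prod_singleton]
    simp
  | succ n hn ih =>
    have h1 : n + 1 - 1 = (n - 1) + 1 := by omega
    rw [h1, Finset.prod_range_succ, ← mul_assoc, ih,
        show ((((n:ℕ) - 1 : ℕ):ℤ) + 1) = (n:ℤ) by omega, qa_sq_diff,
        show 2*l + 2*(n:ℤ) = 2*(l+n) by ring, show 2*l - 2*(n:ℤ) = 2*(l-n) by ring]
    push_cast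
    rw [show l - ((n:ℤ)+1) + 1 = (l - n + 1) - 1 by push_cast; ring,
        show l + ((n:ℤ)+1) - 1 = l + n by push_cast; ring,
        prod_Icc_pred _ _ _ (by omega),
        show l + (n:ℤ) = (l + n - 1) + 1 by ring,
        prod_Icc_succ _ _ _ (by omega),
        show l - (n:ℤ) + 1 - 1 = l - n by ring,
        show l + (n:ℤ) - 1 + 1 = l + n by ring]
    ring





lemma gOdd_eq (l : ℤ) (m : ℕ) (hm : 1 ≤ m) :
    gOddEval' l m = (∏ j ∈ Finset.Icc (l-(m:ℤ)+1) (l+(m:ℤ)-1), qa (2*j)) / qfac (2*m-1) := by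
  unfold gOddEval'
  rw [prod_O l m hm]

lemma gEven_eq (l : ℤ) (m : ℕ) (hm : 1 ≤ m) :
    gEvenEval l m
      = qa (2*l) * (∏ j ∈ Finset.Icc (l-(m:ℤ)+1) (l+(m:ℤ)-1), qa (2*j)) / qfac (2*m) := by
  unfold gEvenEval
  congr 1
  rw [show m = (m-1)+1 by omega, Finset.prod_range_succ']
  simp only [Nat.cast_zero, mul_zero, qa_zero, ne_eq, OfNat.ofNat_ne_zero,
    not_false_eq_true, zero_pow, sub_zero]
  push_cast
  rw [show ((m-1:ℕ):ℤ) + 1 = (m:ℤ) by omega, ← prod_O l m hm]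
  ring

lemma split2 (s : Finset ℤ) :
    ∏ j ∈ s, qa (2*j) = (∏ j ∈ s, qa j) * ∏ j ∈ s, (q^j + q^(-j)) := by
  rw [← Finset.prod_mul_distrib]
  exact Finset.prod_congr rfl (fun j _ => qa_double j)

lemma main_id (l : ℤ) (m : ℕ) (hm : 1 ≤ m) :
    gEvenEval l m = qbin (l + m - 1) (2 * m)
        * ∏ i ∈ Finset.Icc (1 - (m : ℤ)) (m : ℤ), (q ^ (l + i) + q ^ (-(l + i)))
      + gOddEval' l m := by
  have hF : qfac (2*m-1) ≠ 0 := qfac_ne _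
  have hG : qa (2*(m:ℤ)) ≠ 0 := qa_ne (by omega)
  have hfac : qfac (2*m) = qfac (2*m-1) * qa (2*(m:ℤ)) := by
    rw [show 2*m = (2*m-1)+1 by omega, qfac_succ, show ((2*m-1:ℕ):ℤ) + 1 = 2*(m:ℤ) by omega]
    norm_num
  have hbin : qbin (l + m - 1) (2 * m)
      = qa (l - m) * (∏ j ∈ Finset.Icc (l-(m:ℤ)+1) (l+(m:ℤ)-1), qa j) / qfac (2*m) := by
    rw [qbin_eq, show l + (m:ℤ) - 1 - (2*m:ℕ) + 1 = (l - m + 1) - 1 by push_cast; ring,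
        prod_Icc_pred _ _ _ (by omega), show l - (m:ℤ) + 1 - 1 = l - m by ring,
        show l + (m:ℤ) - 1 = l + m - 1 by ring, mul_div_assoc]
  have hP : ∏ i ∈ Finset.Icc (1 - (m : ℤ)) (m : ℤ), (q ^ (l + i) + q ^ (-(l + i)))
      = (q^(l+m) + q^(-(l+(m:ℤ))))
        * ∏ j ∈ Finset.Icc (l-(m:ℤ)+1) (l+(m:ℤ)-1), (q^j + q^(-j)) := by
    rw [prod_Icc_shift (fun j => q^j + q^(-j)) _ _ l,
        show l + ((m:ℤ)) = (l + m - 1) + 1 by ring,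
        show l + (1 - (m:ℤ)) = l - m + 1 by ring,
        prod_Icc_succ _ _ _ (by omega), show l + (m:ℤ) - 1 + 1 = l + m by ring]
  rw [gEven_eq l m hm, gOdd_eq l m hm, hbin, hP, split2, hfac]
  set A := ∏ j ∈ Finset.Icc (l-(m:ℤ)+1) (l+(m:ℤ)-1), qa j
  set B := ∏ j ∈ Finset.Icc (l-(m:ℤ)+1) (l+(m:ℤ)-1), (q^j + q^(-j))
  have key := key_sub l (m:ℤ)
  set u := q^(l+(m:ℤ)) with hu
  set v := q^(-(l+(m:ℤ))) with hv
  field_simp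
  linear_combination (A*B) * key



lemma q_zpow_mem (n : ℤ) : q^n ∈ LaurentZ := by
  have hq : q ∈ LaurentZ := Subring.subset_closure (by simp)
  have hqi : q⁻¹ ∈ LaurentZ := Subring.subset_closure (by simp)
  obtain ⟨k, rfl | rfl⟩ := Int.eq_nat_or_neg n
  · rw [zpow_natCast]; exact pow_mem hq k
  · rw [zpow_neg, zpow_natCast, ← inv_pow]; exact pow_mem hqi k

lemma qbin_prod (a : ℤ) (n : ℕ) :
    qbin a n = (∏ k ∈ Finset.range n, qa (a - (k:ℤ))) / qfac n := by
  unfold qbin qfac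
  rw [Finset.prod_div_distrib]

lemma qbin_zero (a : ℤ) : qbin a 0 = 1 := by simp [qbin]

lemma qbin_eq_zero (a : ℤ) (n : ℕ) (h0 : 0 ≤ a) (h1 : a < n) : qbin a n = 0 := by
  unfold qbin
  apply Finset.prod_eq_zero (i := a.toNat) (by simp [Finset.mem_range]; omega)
  rw [show a - (a.toNat:ℤ) = 0 by omega, qa_zero, zero_div]

lemma qbin_pascal (a : ℤ) (n : ℕ) :
    qbin a (n+1) = q^((n:ℤ)+1) * qbin (a-1) (n+1) + q^((n:ℤ)+1-a) * qbin (a-1) n := by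
  have hF : qfac n ≠ 0 := qfac_ne n
  have hG : qa ((n:ℤ)+1) ≠ 0 := qa_ne (by omega)
  have hN1 : ∏ k ∈ Finset.range (n+1), qa (a - (k:ℤ))
      = qa a * ∏ k ∈ Finset.range n, qa (a - 1 - (k:ℤ)) := by
    rw [Finset.prod_range_succ']
    simp only [Nat.cast_zero, sub_zero]
    rw [mul_comm]
    congr 1
    exact Finset.prod_congr rfl (fun k _ => by push_cast; ring_nf)
  have hN2 : ∏ k ∈ Finset.range (n+1), qa (a - 1 - (k:ℤ))
      = (∏ k ∈ Finset.range n, qa (a - 1 - (k:ℤ))) * qa (a - 1 - n) := by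
    rw [Finset.prod_range_succ]
  have hsplit := qa_split a ((n:ℤ)+1)
  rw [qbin_prod, qbin_prod, qbin_prod, hN1, hN2,
      show qfac (n+1) = qfac n * qa ((n:ℤ)+1) from qfac_succ n]
  set N := ∏ k ∈ Finset.range n, qa (a - 1 - (k:ℤ))
  rw [show a - ((n:ℤ)+1) = a - 1 - n by ring] at hsplit
  set u := q^((n:ℤ)+1)
  set v := q^((n:ℤ)+1-a)
  field_simp
  linear_combination N * hsplit

lemma qbin_nat_mem (N : ℕ) : ∀ n : ℕ, qbin (N:ℤ) n ∈ LaurentZ := by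
  induction N with
  | zero =>
    intro n
    cases n with
    | zero => rw [qbin_zero]; exact one_mem _
    | succ k =>
      rw [qbin_eq_zero _ _ (by norm_num) (by push_cast; omega)]
      exact zero_mem _
  | succ N ih =>
    intro n
    cases n with
    | zero => rw [qbin_zero]; exact one_mem _
    | succ k =>
      push_cast
      rw [qbin_pascal, show ((N:ℤ)+1) - 1 = (N:ℤ) by ring]
      exact add_mem (mul_mem (q_zpow_mem _) (ih _)) (mul_mem (q_zpow_mem _) (ih _))

lemma qbin_reflect (a : ℤ) (n : ℕ) :
    qbin a n = (-1)^n * qbin ((n:ℤ) - 1 - a) n := by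
  rw [qbin_prod, qbin_prod]
  have h1 : ∏ k ∈ Finset.range n, qa (a - (k:ℤ))
      = (-1)^n * ∏ k ∈ Finset.range n, qa ((k:ℤ) - a) := by
    rw [show ((-1:RatFunc ℚ))^n = ∏ _k ∈ Finset.range n, (-1:RatFunc ℚ) by simp, ← Finset.prod_mul_distrib]
    refine Finset.prod_congr rfl (fun k _ => ?_)
    rw [show a - (k:ℤ) = -((k:ℤ) - a) by ring, qa_neg]
    ring
  have h2 : ∏ k ∈ Finset.range n, qa ((n:ℤ) - 1 - a - (k:ℤ))
      = ∏ k ∈ Finset.range n, qa ((k:ℤ) - a) := by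
    rw [← Finset.prod_range_reflect (fun k => qa ((k:ℤ) - a)) n]
    apply Finset.prod_congr rfl
    intro j hj
    simp only [Finset.mem_range] at hj
    congr 1
    omega
  rw [h1, h2, mul_div_assoc]

lemma qbin_mem (a : ℤ) (n : ℕ) : qbin a n ∈ LaurentZ := by
  rcases le_or_gt 0 a with h | h
  · have : a = (a.toNat : ℤ) := by omega
    rw [this]
    exact qbin_nat_mem _ n
  · rw [qbin_reflect]
    have : (n:ℤ) - 1 - a = (((n:ℤ) - 1 - a).toNat : ℤ) := by omega
    rw [this]
    exact mul_mem (pow_mem (neg_mem (one_mem _)) n) (qbin_nat_mem _ n)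

lemma gOdd_eq2 (l : ℤ) (m : ℕ) (hm : 1 ≤ m) :
    gOddEval' l m = qbin (l + m - 1) (2*m-1)
      * ∏ j ∈ Finset.Icc (l-(m:ℤ)+1) (l+(m:ℤ)-1), (q^j + q^(-j)) := by
  rw [gOdd_eq l m hm, split2, qbin_eq,
      show l + (m:ℤ) - 1 - ((2*m-1:ℕ):ℤ) + 1 = l - m + 1 by omega,
      show l + (m:ℤ) - 1 = l + m - 1 by ring]
  ring

lemma pow_sum_mem (j : ℤ) : q^j + q^(-j) ∈ LaurentZ :=
  add_mem (q_zpow_mem j) (q_zpow_mem (-j))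

lemma gEven_mem (l : ℤ) (m : ℕ) (hm : 1 ≤ m) : gEvenEval l m ∈ LaurentZ := by
  rw [main_id l m hm, gOdd_eq2 l m hm]
  refine add_mem (mul_mem (qbin_mem _ _) (prod_mem (fun i _ => pow_sum_mem _)))
    (mul_mem (qbin_mem _ _) (prod_mem (fun i _ => pow_sum_mem _)))

theorem stmt3 (ℓ : ℤ) (m : ℕ) (hm : 1 ≤ m) :
    gEvenEval ℓ m ∈ LaurentZ ∧
    gEvenEval ℓ m = qbin (ℓ + m - 1) (2 * m)
        * ∏ i ∈ Finset.Icc (1 - (m : ℤ)) (m : ℤ), (q ^ (ℓ + i) + q ^ (-(ℓ + i)))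
      + gOddEval' ℓ m :=
  ⟨gEven_mem ℓ m hm, main_id ℓ m hm⟩
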